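/- arXiv:2510.03941 — 3 statements merged into one kernel-verified Lean document; each statement's English description precedes it below -/
import Mathlib

section
/- The conflict graph of an i-RSC execution is acyclic: if (e, ν) is an execution in which every matching pair in the valid communication ν has the form {j, j+1} (the receive immediately follows its matched send), then the directed conflict graph CG(e, ν) has no directed cycle. -/
/-- Communication actions: `send p q m` (written `pq!m`) and `recv p q m`
(written `pq?m`, performed by `q`). -/
inductive CAct (P M : Type) where
  | send (p q : P) (m : M)
  | recv (p q : P) (m : M)

namespace CAct

/-- The active process of an action: the sender of a send, the receiver of a
receive. -/
def active {P M : Type} : CAct P M → P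
  | .send p _ _ => p
  | .recv _ q _ => q

/-- The channel of an action. -/
def chan {P M : Type} : CAct P M → P × P
  | .send p q _ => (p, q)
  | .recv p q _ => (p, q)

/-- Whether an action is a send. -/
def isSend {P M : Type} : CAct P M → Prop
  | .send _ _ _ => True
  | .recv _ _ _ => False

end CAct

variable {P M : Type}

/-- `x` is a matching pair of `e`: two indices `j < j'` with `a_j` a send and
`a_{j'}` a receive on the same channel (the messages need not coincide, to
account for interference). -/
def IsMatchingPair (e : List (CAct P M)) (x : Finset (Fin e.length)) : Prop :=
  ∃ j j' : Fin e.length, j < j' ∧ x = {j, j'} ∧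
    (e.get j).isSend ∧ ¬ (e.get j').isSend ∧ (e.get j).chan = (e.get j').chan

/-- `x` is an unmatched send: a singleton `{j}` with `a_j` a send. -/
def IsUnmatchedSend (e : List (CAct P M)) (x : Finset (Fin e.length)) : Prop :=
  ∃ j : Fin e.length, x = {j} ∧ (e.get j).isSend

/-- `ν` is a valid communication of `e`: a partition of the indices of `e`
into interactions, each being a matching pair or an unmatched send. -/
def ValidComm (e : List (CAct P M)) (ν : Finset (Finset (Fin e.length))) : Prop :=
  (∀ x ∈ ν, IsMatchingPair e x ∨ IsUnmatchedSend e x) ∧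
  (∀ j : Fin e.length, ∃! x, x ∈ ν ∧ j ∈ x)

/-- `j ≺ j'`: `j < j'` and the actions at `j`, `j'` do not commute (they have
the same active process or form a matching pair in `ν`). -/
def Prec (e : List (CAct P M)) (ν : Finset (Finset (Fin e.length)))
    (j j' : Fin e.length) : Prop :=
  j < j' ∧ ((e.get j).active = (e.get j').active ∨ ({j, j'} : Finset (Fin e.length)) ∈ ν)

/-- The edge relation of the conflict graph `CG(e, ν)`: an edge from
interaction `x₁` to a distinct interaction `x₂` whenever some `j₁ ∈ x₁`,
`j₂ ∈ x₂` satisfy `j₁ ≺ j₂`. -/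
def CGEdge (e : List (CAct P M)) (ν : Finset (Finset (Fin e.length)))
    (x₁ x₂ : Finset (Fin e.length)) : Prop :=
  x₁ ∈ ν ∧ x₂ ∈ ν ∧ x₁ ≠ x₂ ∧ ∃ j₁ ∈ x₁, ∃ j₂ ∈ x₂, Prec e ν j₁ j₂

/-- The conflict graph has no directed cycle. -/
def CGAcyclic (e : List (CAct P M)) (ν : Finset (Finset (Fin e.length))) : Prop :=
  ∀ x, ¬ Relation.TransGen (CGEdge e ν) x x

/-- `(e, ν)` is an i-RSC execution: every matching pair in `ν` has the form
`{j, j+1}` (the receive immediately follows its matched send). -/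
def IRSC (e : List (CAct P M)) (ν : Finset (Finset (Fin e.length))) : Prop :=
  ∀ x ∈ ν, IsMatchingPair e x →
    ∀ j j' : Fin e.length, j ∈ x → j' ∈ x → j < j' → (j' : ℕ) = (j : ℕ) + 1

/-- Isomorphism of the conflict graphs of `(e, ν)` and `(e', ν')`. -/
def CGIso (e : List (CAct P M)) (ν : Finset (Finset (Fin e.length)))
    (e' : List (CAct P M)) (ν' : Finset (Finset (Fin e'.length))) : Prop :=
  ∃ φ : {x // x ∈ ν} ≃ {x // x ∈ ν'},
    ∀ a b : {x // x ∈ ν}, CGEdge e ν a.1 b.1 ↔ CGEdge e' ν' (φ a).1 (φ b).1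

/-- `(e, ν)` is causally equivalent to some i-RSC execution. -/
def CausEquivIRSC (e : List (CAct P M)) (ν : Finset (Finset (Fin e.length))) : Prop :=
  ∃ (e' : List (CAct P M)) (ν' : Finset (Finset (Fin e'.length))),
    ValidComm e' ν' ∧ IRSC e' ν' ∧ CGIso e ν e' ν'

/-- The conflict graph of an i-RSC execution is acyclic. -/
theorem irsc_conflictGraph_acyclic {P M : Type}
    (e : List (CAct P M)) (ν : Finset (Finset (Fin e.length)))
    (hν : ValidComm e ν) (hirsc : IRSC e ν) :
    CGAcyclic e ν := by
  classical
  -- every interaction is nonempty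
  have hne : ∀ x ∈ ν, x.Nonempty := by
    intro x hx
    rcases hν.1 x hx with ⟨j, j', _, rfl, _⟩ | ⟨j, rfl, _⟩
    · exact ⟨j, by simp⟩
    · exact ⟨j, by simp⟩
  -- key function: value of the minimum element
  set K : Finset (Fin e.length) → ℕ :=
    fun x => if h : x.Nonempty then ((x.min' h : Fin e.length) : ℕ) else 0 with hK
  have hKval : ∀ x (h : x.Nonempty), K x = ((x.min' h : Fin e.length) : ℕ) := by
    intro x h; simp [hK, h]
  -- every element of an interaction is ≤ min + 1
  have hbound : ∀ x ∈ ν, ∀ j ∈ x, (j : ℕ) ≤ K x + 1 := by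
    intro x hx j hj
    have hnex := hne x hx
    rw [hKval x hnex]
    rcases hν.1 x hx with hmp | ⟨k, rfl, _⟩
    · obtain ⟨a, b, hab, hx2, _⟩ := hmp
      have hb : (b : ℕ) = (a : ℕ) + 1 :=
        hirsc x hx ⟨a, b, hab, hx2, by tauto⟩ a b (by simp [hx2]) (by simp [hx2]) hab
      have hmin : x.min' hnex = a := by
        apply le_antisymm
        · exact Finset.min'_le x a (by simp [hx2])
        · apply Finset.le_min'
          intro y hy
          rw [hx2] at hy
          rcases Finset.mem_insert.1 hy with rfl | hy
          · exact le_refl _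
          · rw [Finset.mem_singleton.1 hy]; exact le_of_lt hab
      rw [hx2] at hj
      rcases Finset.mem_insert.1 hj with rfl | hj
      · rw [hmin]; omega
      · rw [Finset.mem_singleton.1 hj, hmin]; omega
    · have hjk : j = k := Finset.mem_singleton.1 hj
      subst hjk
      simp
  -- an edge strictly increases K
  have hstep : ∀ x₁ x₂, CGEdge e ν x₁ x₂ → K x₁ < K x₂ := by
    intro x₁ x₂ hedge
    obtain ⟨h1, h2, hne12, j₁, hj₁, j₂, hj₂, hlt, _⟩ := hedge
    have hne1 := hne x₁ h1
    have hne2 := hne x₂ h2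
    have hmle : ((x₁.min' hne1 : Fin e.length) : ℕ) ≤ (j₁ : ℕ) :=
      Finset.min'_le x₁ j₁ hj₁
    have hj2le : (j₂ : ℕ) ≤ K x₂ + 1 := hbound x₂ h2 j₂ hj₂
    have hltn : (j₁ : ℕ) < (j₂ : ℕ) := hlt
    rw [hKval x₁ hne1, hKval x₂ hne2]
    rw [hKval x₂ hne2] at hj2le
    -- so min x₁ ≤ min x₂; rule out equality
    by_contra hcon
    push_neg at hcon
    have heq : ((x₁.min' hne1 : Fin e.length) : ℕ) = ((x₂.min' hne2 : Fin e.length) : ℕ) := by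
      omega
    have heqf : x₁.min' hne1 = x₂.min' hne2 := Fin.ext heq
    have hm1 : x₁.min' hne1 ∈ x₁ := Finset.min'_mem x₁ hne1
    have hm2 : x₁.min' hne1 ∈ x₂ := heqf ▸ Finset.min'_mem x₂ hne2
    obtain ⟨y, _, hy⟩ := hν.2 (x₁.min' hne1)
    have e1 : x₁ = y := hy x₁ ⟨h1, hm1⟩
    have e2 : x₂ = y := hy x₂ ⟨h2, hm2⟩
    exact hne12 (e1.trans e2.symm)
  -- conclude acyclicity
  intro x hx
  have hmono : ∀ a b, CGEdge e ν a b → K a < K b := hstep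
  have htrans : Transitive (fun a b : Finset (Fin e.length) => K a < K b) := by
    intro a b c h1 h2; omega
  have := Relation.TransGen.mono hmono x x hx
  rw [@Relation.transGen_eq_self _ (fun a b : Finset (Fin e.length) => K a < K b) ⟨fun _ _ _ h1 h2 => htrans h1 h2⟩] at this
  omega
end

section
/- An execution (e, ν) is causally equivalent to an i-RSC execution if and only if its conflict graph CG(e, ν) is acyclic. -/
variable {P M : Type}

lemma validComm_disjoint {e : List (CAct P M)} {ν : Finset (Finset (Fin e.length))}
    (hν : ValidComm e ν) {x y : Finset (Fin e.length)} (hx : x ∈ ν) (hy : y ∈ ν)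
    (hxy : x ≠ y) {j : Fin e.length} (hjx : j ∈ x) (hjy : j ∈ y) : False :=
  hxy ((hν.2 j).unique ⟨hx, hjx⟩ ⟨hy, hjy⟩)

lemma validComm_nonempty {e : List (CAct P M)} {ν : Finset (Finset (Fin e.length))}
    (hν : ValidComm e ν) {x : Finset (Fin e.length)} (hx : x ∈ ν) : x.Nonempty := by
  rcases hν.1 x hx with ⟨j, j', _, rfl, _⟩ | ⟨j, rfl, _⟩
  · exact ⟨j, by simp⟩
  · exact ⟨j, by simp⟩

lemma prec_active {e : List (CAct P M)} {ν : Finset (Finset (Fin e.length))}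
    (hν : ValidComm e ν) {x y : Finset (Fin e.length)} (hx : x ∈ ν) (hy : y ∈ ν)
    (hxy : x ≠ y) {j₁ j₂ : Fin e.length} (h1 : j₁ ∈ x) (h2 : j₂ ∈ y)
    (hp : Prec e ν j₁ j₂) : (e.get j₁).active = (e.get j₂).active := by
  rcases hp.2 with h | h
  · exact h
  · exfalso
    have hx' : x = {j₁, j₂} := (hν.2 j₁).unique ⟨hx, h1⟩ ⟨h, by simp⟩
    have hy' : y = {j₁, j₂} := (hν.2 j₂).unique ⟨hy, h2⟩ ⟨h, by simp⟩
    exact hxy (hx'.trans hy'.symm)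

lemma irsc_acyclic {e : List (CAct P M)} {ν : Finset (Finset (Fin e.length))}
    (hν : ValidComm e ν) (hi : IRSC e ν) : CGAcyclic e ν := by
  have key : ∀ x y, CGEdge e ν x y → ∀ (hx : x.Nonempty) (hy : y.Nonempty),
      x.min' hx < y.min' hy := by
    rintro x y ⟨hx, hy, hne, j₁, hj₁, j₂, hj₂, hp⟩ hxne hyne
    have h12 : j₁ < j₂ := hp.1
    have hminx : x.min' hxne ≤ j₁ := Finset.min'_le _ _ hj₁
    have hkey : j₁ < y.min' hyne := by
      rcases hν.1 y hy with ⟨k, k', hkk', hye, hks, hkr, hkc⟩ | ⟨k, hye, hks⟩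
      · have hconsec : (k' : ℕ) = (k : ℕ) + 1 :=
          hi y hy ⟨k, k', hkk', hye, hks, hkr, hkc⟩ k k' (by simp [hye]) (by simp [hye]) hkk'
        have hminy : y.min' hyne = k := by
          apply le_antisymm (Finset.min'_le _ _ (by simp [hye]))
          apply Finset.le_min'
          intro a ha
          rw [hye] at ha
          rcases Finset.mem_insert.mp ha with rfl | ha
          · exact le_refl _
          · rw [Finset.mem_singleton] at ha; subst ha; exact le_of_lt hkk'
        rw [hminy]
        rw [hye] at hj₂
        rcases Finset.mem_insert.mp hj₂ with rfl | hj₂'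
        · exact h12
        · rw [Finset.mem_singleton] at hj₂'
          subst hj₂'
          have hle : (j₁ : ℕ) < (k : ℕ) + 1 := by rw [← hconsec]; exact h12
          have hne' : j₁ ≠ k := by
            intro hcon
            exact validComm_disjoint hν hx hy hne hj₁ (by simp [hye, hcon])
          have hle' : (j₁ : ℕ) ≤ (k : ℕ) := Nat.lt_succ_iff.mp hle
          have hltn : (j₁ : ℕ) < (k : ℕ) :=
            lt_of_le_of_ne hle' (fun h => hne' (Fin.ext h))
          exact hltn
      · have hminy : y.min' hyne = k := by
          apply le_antisymm (Finset.min'_le _ _ (by simp [hye]))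
          apply Finset.le_min'
          intro a ha
          rw [hye, Finset.mem_singleton] at ha; subst ha; exact le_refl _
        rw [hminy]
        rw [hye, Finset.mem_singleton] at hj₂
        subst hj₂
        exact h12
    exact lt_of_le_of_lt hminx hkey
  have key2 : ∀ x y, Relation.TransGen (CGEdge e ν) x y →
      ∃ (hx : x.Nonempty) (hy : y.Nonempty), x.min' hx < y.min' hy := by
    intro x y h
    induction h with
    | single h =>
      exact ⟨validComm_nonempty hν h.1, validComm_nonempty hν h.2.1, key _ _ h _ _⟩
    | tail h₁ h₂ ih =>
      obtain ⟨hx, hb, hlt⟩ := ih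
      exact ⟨hx, validComm_nonempty hν h₂.2.1, lt_trans hlt (key _ _ h₂ _ _)⟩
  intro x hx
  obtain ⟨h1, h2, hlt⟩ := key2 x x hx
  exact lt_irrefl _ hlt

lemma acyclic_of_iso {e e' : List (CAct P M)} {ν : Finset (Finset (Fin e.length))}
    {ν' : Finset (Finset (Fin e'.length))} (hiso : CGIso e ν e' ν')
    (hac : CGAcyclic e' ν') : CGAcyclic e ν := by
  obtain ⟨φ, hφ⟩ := hiso
  intro x hx
  have hmem : x ∈ ν := by
    cases hx with
    | single h => exact h.1
    | tail _ h => exact h.2.1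
  have lift : ∀ a b, Relation.TransGen (CGEdge e ν) a b → ∀ (ha : a ∈ ν) (hb : b ∈ ν),
      Relation.TransGen (CGEdge e' ν') (φ ⟨a, ha⟩).1 (φ ⟨b, hb⟩).1 := by
    intro a b h
    induction h with
    | single h =>
      intro ha hb
      exact Relation.TransGen.single ((hφ ⟨a, ha⟩ ⟨_, hb⟩).mp h)
    | tail h₁ h₂ ih =>
      intro ha hb
      exact (ih ha h₂.1).tail ((hφ ⟨_, h₂.1⟩ ⟨_, hb⟩).mp h₂)
  exact hac _ (lift x x hx hmem hmem)

lemma causEquiv_construct {e : List (CAct P M)} {ν : Finset (Finset (Fin e.length))}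
    (hν : ValidComm e ν) (κ : Type) [κLO : LinearOrder κ]
    (F : {x // x ∈ ν} → κ) (hFinj : Function.Injective F)
    (hF_edge : ∀ a b : {x // x ∈ ν}, CGEdge e ν a.1 b.1 → F a < F b) :
    CausEquivIRSC e ν := by
  classical
  -- the interaction containing each index
  have hex : ∀ j : Fin e.length, ∃ x : {x // x ∈ ν}, j ∈ x.1 := by
    intro j
    obtain ⟨x, ⟨hx, hj⟩, _⟩ := hν.2 j
    exact ⟨⟨x, hx⟩, hj⟩
  choose f hf using hex
  have funiq : ∀ (j : Fin e.length) (x : Finset (Fin e.length)), x ∈ ν → j ∈ x →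
      (f j).1 = x := fun j x hx hj => (hν.2 j).unique ⟨(f j).2, hf j⟩ ⟨hx, hj⟩
  -- sort the indices lexicographically by (interaction key, index)
  let g : Fin e.length → Lex (κ × Fin e.length) := fun j => toLex (F (f j), j)
  have hginj : Function.Injective g := by
    intro a b h
    exact congrArg (fun p => (ofLex p).2) h
  let σ := Tuple.sort g
  have hmono := (Tuple.monotone_sort g).strictMono_of_injective (hginj.comp σ.injective)
  have horder : ∀ j j' : Fin e.length, σ.symm j < σ.symm j' ↔ g j < g j' := by
    intro j j'
    have h := (hmono.lt_iff_lt (a := σ.symm j) (b := σ.symm j')).symm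
    simpa [σ] using h
  let e' : List (CAct P M) := List.ofFn (fun i => e.get (σ i))
  have hlen : e'.length = e.length := List.length_ofFn
  let ρ : Fin e.length ≃ Fin e'.length := σ.symm.trans (finCongr hlen.symm)
  have hρ_lt : ∀ j j' : Fin e.length, ρ j < ρ j' ↔ g j < g j' := fun j j' => horder j j'
  have hget : ∀ j : Fin e.length, e'.get (ρ j) = e.get j := by
    intro j
    show (List.ofFn (fun i => e.get (σ i))).get (ρ j) = e.get j
    rw [List.get_ofFn]
    exact congrArg e.get (σ.apply_symm_apply j)
  let ν' : Finset (Finset (Fin e'.length)) := ν.image (fun x => x.image ρ)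
  have himg_inj : Function.Injective (fun x : Finset (Fin e.length) => x.image ρ) :=
    Finset.image_injective ρ.injective
  have hmemν' : ∀ {x : Finset (Fin e.length)}, x ∈ ν → x.image ρ ∈ ν' :=
    fun hx => Finset.mem_image_of_mem _ hx
  have hsame : ∀ {j j' : Fin e.length}, f j = f j' → (ρ j < ρ j' ↔ j < j') := by
    intro j j' hff
    rw [hρ_lt]
    show toLex (F (f j), j) < toLex (F (f j'), j') ↔ j < j'
    rw [Prod.Lex.lt_iff]
    simp [hff]
  have hdiff : ∀ {j j' : Fin e.length}, F (f j) < F (f j') → ρ j < ρ j' := by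
    intro j j' h
    rw [hρ_lt]
    show toLex (F (f j), j) < toLex (F (f j'), j')
    rw [Prod.Lex.lt_iff]
    exact Or.inl h
  -- validity of the reordered communication
  have hvalid' : ValidComm e' ν' := by
    constructor
    · intro x' hx'
      obtain ⟨x, hx, rfl⟩ := Finset.mem_image.mp hx'
      rcases hν.1 x hx with ⟨j, j', hjj', hxe, hs1, hs2, hs3⟩ | ⟨j, hxe, hsend⟩
      · left
        have hfj : f j = f j' := Subtype.ext
          ((funiq j x hx (by rw [hxe]; simp)).trans (funiq j' x hx (by rw [hxe]; simp)).symm)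
        refine ⟨ρ j, ρ j', (hsame hfj).mpr hjj', ?_, ?_, ?_, ?_⟩
        · rw [hxe]; simp [Finset.image_insert]
        · rw [hget]; exact hs1
        · rw [hget]; exact hs2
        · rw [hget, hget]; exact hs3
      · right
        exact ⟨ρ j, by rw [hxe]; simp, by rw [hget]; exact hsend⟩
    · intro i
      refine ⟨((f (ρ.symm i)).1).image ρ, ⟨hmemν' (f (ρ.symm i)).2, ?_⟩, ?_⟩
      · have h1 := Finset.mem_image_of_mem ρ (hf (ρ.symm i))
        rwa [Equiv.apply_symm_apply] at h1
      · rintro y' ⟨hy', hiy'⟩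
        obtain ⟨y, hy, rfl⟩ := Finset.mem_image.mp hy'
        obtain ⟨k, hk, hki⟩ := Finset.mem_image.mp hiy'
        have hk' : k = ρ.symm i := by rw [← hki]; simp
        subst hk'
        rw [funiq _ y hy hk]
  -- the reordered execution is i-RSC
  have hirsc : IRSC e' ν' := by
    intro x' hx' _ i i' hi hi' hii'
    obtain ⟨x, hx, rfl⟩ := Finset.mem_image.mp hx'
    rcases hν.1 x hx with ⟨j, j', hjj', hxe, _, _, _⟩ | ⟨j, hxe, _⟩
    · subst hxe
      have hfj : f j = f j' := Subtype.ext
        ((funiq j _ hx (by simp)).trans (funiq j' _ hx (by simp)).symm)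
      have hρlt : ρ j < ρ j' := (hsame hfj).mpr hjj'
      have himg : ({j, j'} : Finset (Fin e.length)).image ρ = {ρ j, ρ j'} := by
        simp [Finset.image_insert]
      rw [himg] at hi hi'
      have hi2 : i = ρ j ∨ i = ρ j' := by simpa using hi
      have hi2' : i' = ρ j ∨ i' = ρ j' := by simpa using hi'
      have hiρ : i = ρ j ∧ i' = ρ j' := by
        rcases hi2 with rfl | rfl <;> rcases hi2' with rfl | rfl
        · exact absurd hii' (lt_irrefl _)
        · exact ⟨rfl, rfl⟩
        · exact absurd (hii'.trans hρlt) (lt_irrefl _)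
        · exact absurd hii' (lt_irrefl _)
      obtain ⟨rfl, rfl⟩ := hiρ
      -- positions are consecutive
      by_contra hnecons
      have h1 : (ρ j : ℕ) + 1 < (ρ j' : ℕ) :=
        lt_of_le_of_ne (Nat.succ_le_of_lt hρlt) (fun h => hnecons h.symm)
      set c : Fin e'.length := ⟨(ρ j : ℕ) + 1, lt_trans h1 (ρ j').isLt⟩ with hc
      have hc1 : ρ j < c := Nat.lt_succ_self _
      have hc2 : c < ρ j' := h1
      obtain ⟨k, hck⟩ : ∃ k, ρ k = c := ⟨ρ.symm c, ρ.apply_symm_apply c⟩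
      have hg1 : g j < g k := (hρ_lt j k).mp (by rw [hck]; exact hc1)
      have hg2 : g k < g j' := (hρ_lt k j').mp (by rw [hck]; exact hc2)
      have hg1' : F (f j) < F (f k) ∨ F (f j) = F (f k) ∧ j < k := Prod.Lex.lt_iff.mp hg1
      have hg2' : F (f k) < F (f j') ∨ F (f k) = F (f j') ∧ k < j' := Prod.Lex.lt_iff.mp hg2
      have hfk : f k ≠ f j := by
        intro hcon
        have hkmem : k ∈ ({j, j'} : Finset (Fin e.length)) := by
          have h4 : (f j).1 = {j, j'} := funiq j _ hx (by simp)
          have h5 : k ∈ (f j).1 := by rw [← hcon]; exact hf k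
          rwa [h4] at h5
        rcases Finset.mem_insert.mp hkmem with rfl | hkmem
        · exact absurd hc1 (by rw [← hck]; exact lt_irrefl _)
        · rw [Finset.mem_singleton] at hkmem
          subst hkmem
          exact absurd hc2 (by rw [← hck]; exact lt_irrefl _)
      rcases hg1' with h4 | ⟨h4, _⟩
      · rcases hg2' with h5 | ⟨h5, _⟩
        · rw [hfj] at h4
          exact absurd (h4.trans h5) (lt_irrefl _)
        · rw [h5, ← hfj] at h4
          exact absurd h4 (lt_irrefl _)
      · exact hfk (hFinj h4).symm
    · -- a singleton interaction cannot contain i < i'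
      subst hxe
      have hi2 : i = ρ j := by simpa using hi
      have hi2' : i' = ρ j := by simpa using hi'
      rw [hi2, hi2'] at hii'
      exact absurd hii' (lt_irrefl _)
  -- the conflict graphs are isomorphic
  have hφinv : ∀ b : {x // x ∈ ν'}, (b.1.image ρ.symm) ∈ ν := by
    intro b
    obtain ⟨x, hx, hxe⟩ := Finset.mem_image.mp b.2
    rw [← hxe, Finset.image_image]
    simpa using hx
  let φ : {x // x ∈ ν} ≃ {x // x ∈ ν'} :=
    { toFun := fun a => ⟨a.1.image ρ, hmemν' a.2⟩
      invFun := fun b => ⟨b.1.image ρ.symm, hφinv b⟩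
      left_inv := fun a => Subtype.ext (by simp [Finset.image_image])
      right_inv := fun b => Subtype.ext (by simp [Finset.image_image]) }
  refine ⟨e', ν', hvalid', hirsc, φ, ?_⟩
  intro a b
  show CGEdge e ν a.1 b.1 ↔ CGEdge e' ν' (a.1.image ρ) (b.1.image ρ)
  constructor
  · rintro h
    obtain ⟨ha, hb, hne, j₁, hj₁, j₂, hj₂, hp⟩ := h
    have hAct := prec_active hν ha hb hne hj₁ hj₂ hp
    have hfa : f j₁ = ⟨a.1, ha⟩ := Subtype.ext (funiq _ _ ha hj₁)
    have hfb : f j₂ = ⟨b.1, hb⟩ := Subtype.ext (funiq _ _ hb hj₂)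
    have hab : F (f j₁) < F (f j₂) := by
      rw [hfa, hfb]
      exact hF_edge _ _ ⟨ha, hb, hne, j₁, hj₁, j₂, hj₂, hp⟩
    have hρ12 : ρ j₁ < ρ j₂ := hdiff hab
    exact ⟨hmemν' ha, hmemν' hb, fun hcon => hne (himg_inj hcon),
      ρ j₁, Finset.mem_image_of_mem _ hj₁, ρ j₂, Finset.mem_image_of_mem _ hj₂,
      hρ12, Or.inl (by rw [hget, hget]; exact hAct)⟩
  · rintro ⟨_, _, hne', i₁, hi₁, i₂, hi₂, hp'⟩
    obtain ⟨j₁, hj₁, rfl⟩ := Finset.mem_image.mp hi₁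
    obtain ⟨j₂, hj₂, rfl⟩ := Finset.mem_image.mp hi₂
    have hne : a.1 ≠ b.1 := fun hcon => hne' (by rw [hcon])
    have hAct' := prec_active hvalid' (hmemν' a.2) (hmemν' b.2) hne'
      (Finset.mem_image_of_mem _ hj₁) (Finset.mem_image_of_mem _ hj₂) hp'
    rw [hget, hget] at hAct'
    have hlt12 : ρ j₁ < ρ j₂ := hp'.1
    have hj₁j₂ : j₁ ≠ j₂ := by
      rintro rfl
      exact validComm_disjoint hν a.2 b.2 hne hj₁ hj₂
    rcases lt_or_gt_of_ne hj₁j₂ with h12 | h21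
    · exact ⟨a.2, b.2, hne, j₁, hj₁, j₂, hj₂, h12, Or.inl hAct'⟩
    · exfalso
      have hedge : CGEdge e ν b.1 a.1 :=
        ⟨b.2, a.2, fun hcon => hne hcon.symm, j₂, hj₂, j₁, hj₁, h21, Or.inl hAct'.symm⟩
      have hfa : f j₁ = ⟨a.1, a.2⟩ := Subtype.ext (funiq _ _ a.2 hj₁)
      have hfb : f j₂ = ⟨b.1, b.2⟩ := Subtype.ext (funiq _ _ b.2 hj₂)
      have hba : F (f j₂) < F (f j₁) := by
        rw [hfa, hfb]
        exact hF_edge _ _ hedge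
      have h21' : ρ j₂ < ρ j₁ := hdiff hba
      exact absurd hlt12 (not_lt.mpr (le_of_lt h21'))

lemma causEquiv_of_acyclic {e : List (CAct P M)} {ν : Finset (Finset (Fin e.length))}
    (hν : ValidComm e ν) (hac : CGAcyclic e ν) : CausEquivIRSC e ν := by
  classical
  let R : {x // x ∈ ν} → {x // x ∈ ν} → Prop :=
    fun a b => Relation.TransGen (CGEdge e ν) a.1 b.1
  let r : {x // x ∈ ν} → {x // x ∈ ν} → Prop := fun a b => a = b ∨ R a b
  haveI : IsRefl {x // x ∈ ν} r := ⟨fun a => Or.inl rfl⟩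
  haveI : IsTrans {x // x ∈ ν} r := by
    constructor
    rintro a b c (rfl | hab) hbc
    · exact hbc
    · rcases hbc with rfl | hbc
      · exact Or.inr hab
      · exact Or.inr (hab.trans hbc)
  haveI : IsPreorder {x // x ∈ ν} r := ⟨⟩
  haveI : IsAntisymm {x // x ∈ ν} r := by
    constructor
    rintro a b (rfl | hab) hba
    · rfl
    · rcases hba with rfl | hba
      · rfl
      · exact absurd (hab.trans hba) (hac a.1)
  haveI : IsPartialOrder {x // x ∈ ν} r := ⟨⟩
  obtain ⟨s, hs, hrs⟩ := extend_partialOrder r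
  haveI := hs
  let t : {x // x ∈ ν} → {x // x ∈ ν} → Prop := fun a b => s a b ∧ a ≠ b
  haveI : IsIrrefl {x // x ∈ ν} t := ⟨fun a h => h.2 rfl⟩
  haveI htt : IsTrans {x // x ∈ ν} t := by
    constructor
    rintro a b c ⟨hab, hab'⟩ ⟨hbc, hbc'⟩
    refine ⟨Trans.trans hab hbc, ?_⟩
    rintro rfl
    exact hab' (antisymm hab hbc)
  haveI : IsStrictOrder {x // x ∈ ν} t := ⟨⟩
  haveI : IsTrichotomous {x // x ∈ ν} t := by
    constructor
    intro a b
    by_cases hab : a = b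
    · exact fun _ _ => hab
    · rcases total_of s a b with h | h
      · exact fun h1 _ => (h1 ⟨h, hab⟩).elim
      · exact fun _ h2 => (h2 ⟨h, Ne.symm hab⟩).elim
  haveI : IsStrictTotalOrder {x // x ∈ ν} t := ⟨⟩
  have hedge_t : ∀ a b : {x // x ∈ ν}, CGEdge e ν a.1 b.1 → t a b := by
    intro a b h
    refine ⟨hrs _ _ (Or.inr (Relation.TransGen.single h)), ?_⟩
    rintro rfl
    exact h.2.2.1 rfl
  exact causEquiv_construct hν {x // x ∈ ν} (κLO := linearOrderOfSTO t) id
    (fun a b h => h) (fun a b h => hedge_t a b h)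

/-- An execution `(e, ν)` is causally equivalent to an i-RSC execution iff
its conflict graph `CG(e, ν)` is acyclic. -/
theorem causEquiv_irsc_iff_acyclic {P M : Type}
    (e : List (CAct P M)) (ν : Finset (Finset (Fin e.length)))
    (hν : ValidComm e ν) :
    CausEquivIRSC e ν ↔ CGAcyclic e ν := by
  constructor
  · rintro ⟨e', ν', hv, hi, hiso⟩
    exact acyclic_of_iso hiso (irsc_acyclic hv hi)
  · exact causEquiv_of_acyclic hν
end

section
/- By Higman's lemma, every upward-closed set of tuples of words under the componentwise subword ordering has finitely many minimal elements; consequently the complement of the reachability set of a lossy FIFO system is a finite union of upward cones and the reachability set itself is a regular (recognisable) set. -/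
/-- Actions of a FIFO system: `send p q m` puts `m` on channel `pq`,
`recv p q m` consumes `m` from channel `pq` (performed by `q`), and
`tau p` is an internal action of `p`. -/
inductive Act (P M : Type) where
  | send (p q : P) (m : M)
  | recv (p q : P) (m : M)
  | tau  (p : P)

/-- A FIFO system: one FIFO automaton per process. -/
structure FSystem (P M : Type) where
  State : P → Type
  init : ∀ p, State p
  trans : ∀ p, State p → Act P M → State p → Prop

namespace FSystem

variable {P M : Type} [DecidableEq P]

/-- A configuration: a global state together with the contents of each channel. -/
abbrev Conf (S : FSystem P M) := (∀ p, S.State p) × (P × P → List M)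

/-- The initial configuration: initial states, all channels empty. -/
def initConf (S : FSystem P M) : Conf S := (S.init, fun _ => [])

/-- The (perfect-channel) labelled successor relation of a FIFO system. -/
def Step (S : FSystem P M) : Conf S → Act P M → Conf S → Prop
  | c, .send p q m, c' =>
      ∃ s', S.trans p (c.1 p) (.send p q m) s' ∧
        c'.1 = Function.update c.1 p s' ∧
        c'.2 = Function.update c.2 (p, q) (c.2 (p, q) ++ [m])
  | c, .recv p q m, c' =>
      ∃ s' rest, S.trans q (c.1 q) (.recv p q m) s' ∧
        c.2 (p, q) = m :: rest ∧
        c'.1 = Function.update c.1 q s' ∧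
        c'.2 = Function.update c.2 (p, q) rest
  | c, .tau p, c' =>
      ∃ s', S.trans p (c.1 p) (.tau p) s' ∧
        c'.1 = Function.update c.1 p s' ∧ c'.2 = c.2

/-- A configuration is `k`-bounded if every channel has at most `k` messages. -/
def Bounded (k : ℕ) {S : FSystem P M} (c : Conf S) : Prop :=
  ∀ ch : P × P, (c.2 ch).length ≤ k

/-- A `k`-bounded step: both endpoints are `k`-bounded. -/
def BStep (S : FSystem P M) (k : ℕ) (c : Conf S) (a : Act P M) (c' : Conf S) : Prop :=
  Step S c a c' ∧ Bounded k c ∧ Bounded k c'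

/-- Reachability by `k`-bounded executions, from an arbitrary configuration. -/
def BReach (S : FSystem P M) (k : ℕ) : Conf S → Conf S → Prop :=
  Relation.ReflTransGen (fun c c' => ∃ a, BStep S k c a c')

/-- The `k`-reachability set `RS_k(S)`. -/
def RSk (S : FSystem P M) (k : ℕ) : Set (Conf S) :=
  {c | BReach S k (initConf S) c}

/-- The (unbounded) reachability set. -/
def Reach (S : FSystem P M) : Set (Conf S) :=
  {c | Relation.ReflTransGen (fun c c' => ∃ a, Step S c a c') (initConf S) c}

end FSystem

namespace FSystem

variable {P M : Type} [DecidableEq P]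

/-- The successor relation under the lossiness interference model: on firing
any transition, any messages in any channel may additionally be dropped
(`w ⪰ w'` iff `w'` is a scattered subword of `w`). -/
def StepLossy (S : FSystem P M) : Conf S → Act P M → Conf S → Prop
  | c, .send p q m, c' =>
      ∃ s', S.trans p (c.1 p) (.send p q m) s' ∧
        c'.1 = Function.update c.1 p s' ∧
        (c'.2 (p, q)).Sublist (c.2 (p, q) ++ [m]) ∧
        ∀ ch, ch ≠ (p, q) → (c'.2 ch).Sublist (c.2 ch)
  | c, .recv p q m, c' =>
      ∃ s', S.trans q (c.1 q) (.recv p q m) s' ∧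
        c'.1 = Function.update c.1 q s' ∧
        (m :: c'.2 (p, q)).Sublist (c.2 (p, q)) ∧
        ∀ ch, ch ≠ (p, q) → (c'.2 ch).Sublist (c.2 ch)
  | c, .tau p, c' =>
      ∃ s', S.trans p (c.1 p) (.tau p) s' ∧
        c'.1 = Function.update c.1 p s' ∧
        ∀ ch, (c'.2 ch).Sublist (c.2 ch)

/-- The reachability set under lossiness. -/
def ReachLossy (S : FSystem P M) : Set (Conf S) :=
  {c | Relation.ReflTransGen (fun c c' => ∃ a, StepLossy S c a c') (initConf S) c}

end FSystem

/-- Algebraic recognisability (regularity) for a set of channel-content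
tuples: it is the preimage of a subset of a finite monoid under a map
compatible with componentwise concatenation. -/
def Recognisable {C M : Type} (L : Set (C → List M)) : Prop :=
  ∃ (Q : Type) (_ : Fintype Q) (_ : Monoid Q) (φ : (C → List M) → Q) (A : Set Q),
    (∀ u v : C → List M, φ (fun ch => u ch ++ v ch) = φ u * φ v) ∧
    L = φ ⁻¹' A


section Higman

variable {C M : Type}

private theorem sublistForall₂_eq_sublist {l₁ l₂ : List M}
    (h : List.SublistForall₂ (· = ·) l₁ l₂) : l₁.Sublist l₂ := by
  induction h with
  | nil => exact List.nil_sublist _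
  | cons h hs ih => subst h; exact ih.cons₂ _
  | cons_right hs ih => exact ih.cons _

private theorem sublist_pwo [Finite M] :
    (Set.univ : Set (List M)).PartiallyWellOrderedOn (fun a b => a.Sublist b) := by
  have h0 : (Set.univ : Set M).PartiallyWellOrderedOn (· = ·) :=
    Set.finite_univ.partiallyWellOrderedOn
  have H := Set.PartiallyWellOrderedOn.partiallyWellOrderedOn_sublistForall₂ (· = ·) h0
  intro f
  obtain ⟨m, n, hmn, h⟩ := H (fun n => ⟨(f n).1, fun _ _ => Set.mem_univ _⟩)
  exact ⟨m, n, hmn, sublistForall₂_eq_sublist h⟩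

private theorem tuple_subseq [Finite M] (L : List C) (f : ℕ → C → List M) :
    ∃ g : ℕ ↪o ℕ, ∀ m n, m ≤ n → ∀ ch ∈ L, ((f (g m)) ch).Sublist ((f (g n)) ch) := by
  induction L with
  | nil => exact ⟨OrderEmbedding.ofStrictMono id strictMono_id, by simp⟩
  | cons ch L ih =>
    obtain ⟨g, hg⟩ := ih
    letI : IsRefl (List M) (fun a b => a.Sublist b) := ⟨fun l => List.Sublist.refl l⟩
    letI : IsTrans (List M) (fun a b => a.Sublist b) := ⟨fun _ _ _ => List.Sublist.trans⟩
    letI : IsPreorder (List M) (fun a b => a.Sublist b) :=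
      { refl := fun l => List.Sublist.refl l, trans := fun _ _ _ => List.Sublist.trans }
    obtain ⟨g', hg'⟩ := sublist_pwo.exists_monotone_subseq (f := fun n => f (g n) ch)
      (fun _ => Set.mem_univ _)
    refine ⟨g'.trans g, fun m n hmn ch' hch' => ?_⟩
    rcases List.mem_cons.mp hch' with rfl | h
    · exact hg' m n hmn
    · exact hg (g' m) (g' n) (g'.monotone hmn) ch' h

private theorem tuple_pwo [Finite C] [Finite M] (f : ℕ → C → List M) :
    ∃ m n, m < n ∧ ∀ ch, ((f m) ch).Sublist ((f n) ch) := by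
  have := Fintype.ofFinite C
  obtain ⟨g, hg⟩ := tuple_subseq (Finset.univ : Finset C).toList f
  exact ⟨g 0, g 1, g.strictMono (by norm_num),
    fun ch => hg 0 1 (by norm_num) ch (by simp)⟩

private theorem upward_part [Finite C] [Finite M] (U : Set (C → List M))
    (hU : ∀ x ∈ U, ∀ y, (∀ ch, (x ch).Sublist (y ch)) → y ∈ U) :
    {x | x ∈ U ∧ ∀ y ∈ U, (∀ ch, (y ch).Sublist (x ch)) →
      ∀ ch, (x ch).Sublist (y ch)}.Finite ∧
    ∃ B : Set (C → List M), B.Finite ∧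
      U = ⋃ b ∈ B, {y | ∀ ch, (b ch).Sublist (y ch)} := by
  classical
  set r : (C → List M) → (C → List M) → Prop := fun x y => ∀ ch, (x ch).Sublist (y ch) with hr
  set Mn : Set (C → List M) := {x | x ∈ U ∧ ∀ y ∈ U, r y x → r x y} with hMn
  have hfin : Mn.Finite := by
    by_contra h
    have e := Set.Infinite.natEmbedding _ h
    obtain ⟨m, n, hmn, hle⟩ := tuple_pwo (fun k => (e k).1)
    have h1 : ((e m) : C → List M) ∈ U := (e m).2.1
    have h2 := (e n).2.2 _ h1 hle
    have : ((e m) : C → List M) = (e n) :=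
      funext fun ch => ((hle ch).antisymm (h2 ch))
    exact hmn.ne (e.injective (Subtype.ext this))
  refine ⟨hfin, Mn, hfin, ?_⟩
  have hpwo : (Set.univ : Set (C → List M)).PartiallyWellOrderedOn r :=
    fun f => tuple_pwo (fun k => (f k).1)
  letI : IsPreorder (C → List M) r :=
    { refl := fun x ch => List.Sublist.refl _
      trans := fun x y z hxy hyz ch => (hxy ch).trans (hyz ch) }
  have hwf : WellFounded (fun a b => r a b ∧ ¬r b a) :=
    Set.wellFoundedOn_univ.mp hpwo.wellFoundedOn
  ext x
  simp only [Set.mem_iUnion, Set.mem_setOf_eq, exists_prop]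
  constructor
  · intro hx
    obtain ⟨mm, ⟨hmU, hmx⟩, hmin⟩ := hwf.has_min {y | y ∈ U ∧ r y x}
      ⟨x, hx, fun ch => List.Sublist.refl _⟩
    refine ⟨mm, ⟨hmU, fun y hy hym => ?_⟩, hmx⟩
    by_contra hns
    exact hmin y ⟨hy, fun ch => (hym ch).trans (hmx ch)⟩ ⟨hym, hns⟩
  · rintro ⟨b, hb, hbx⟩
    exact hU b hb.1 x hbx

end Higman


/-- Finite monoid tracking, for each word, its set of scattered subwords of
length at most `N`. -/
@[ext] structure SWMon (M : Type) (N : ℕ) where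
  carrier : Set {u : List M // u.length ≤ N}

namespace SWMon

variable {M : Type} {N : ℕ}

instance : Monoid (SWMon M N) where
  one := ⟨{u | u.1 = []}⟩
  mul S T := ⟨{u | ∃ a b : {u : List M // u.length ≤ N},
    a ∈ S.carrier ∧ b ∈ T.carrier ∧ u.1 = a.1 ++ b.1}⟩
  mul_assoc S T U := by
    ext u
    constructor
    · rintro ⟨x, c, ⟨a, b, ha, hb, hx⟩, hc, hu⟩
      have hlen : (b.1 ++ c.1).length ≤ N := by
        have := u.2
        rw [hu, hx, List.append_assoc] at this
        simp only [List.length_append] at this ⊢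
        omega
      exact ⟨a, ⟨b.1 ++ c.1, hlen⟩, ha, ⟨b, c, hb, hc, rfl⟩,
        by rw [hu, hx, List.append_assoc]⟩
    · rintro ⟨a, x, ha, ⟨b, c, hb, hc, hx⟩, hu⟩
      have hlen : (a.1 ++ b.1).length ≤ N := by
        have := u.2
        rw [hu, hx] at this
        simp only [List.length_append] at this ⊢
        omega
      exact ⟨⟨a.1 ++ b.1, hlen⟩, c, ⟨a, b, ha, hb, rfl⟩, hc,
        by rw [hu, hx, List.append_assoc]⟩
  one_mul S := by
    ext u
    constructor
    · rintro ⟨a, b, ha, hb, hu⟩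
      have ha' : (a : List M) = [] := ha
      have : u = b := Subtype.ext (by rw [hu, ha']; rfl)
      rwa [this]
    · intro hu
      exact ⟨⟨[], by simp⟩, u, rfl, hu, by simp⟩
  mul_one S := by
    ext u
    constructor
    · rintro ⟨a, b, ha, hb, hu⟩
      have hb' : (b : List M) = [] := hb
      have : u = a := Subtype.ext (by rw [hu, hb', List.append_nil])
      rwa [this]
    · intro hu
      exact ⟨u, ⟨[], by simp⟩, hu, rfl, by simp⟩

theorem mem_mul {S T : SWMon M N} {u : {u : List M // u.length ≤ N}} :
    u ∈ (S * T).carrier ↔ ∃ a b : {u : List M // u.length ≤ N},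
      a ∈ S.carrier ∧ b ∈ T.carrier ∧ u.1 = a.1 ++ b.1 := Iff.rfl

instance [Finite M] : Finite (SWMon M N) := by
  have : Finite {u : List M // u.length ≤ N} := (List.finite_length_le M N).to_subtype
  exact Finite.of_equiv (Set {u : List M // u.length ≤ N})
    ⟨SWMon.mk, SWMon.carrier, fun _ => rfl, fun _ => rfl⟩

end SWMon


open FSystem in
private theorem reachLossy_down {P M : Type} [DecidableEq P] (S : FSystem P M)
    (c : Conf S) (hc : c ∈ ReachLossy S) :
    ∀ w' : P × P → List M, (∀ ch, (w' ch).Sublist (c.2 ch)) →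
      (c.1, w') ∈ ReachLossy S := by
  induction hc with
  | refl =>
    intro w' hw'
    have hw0 : w' = fun _ => [] := funext fun ch => List.sublist_nil.mp (hw' ch)
    rw [hw0]
    exact Relation.ReflTransGen.refl
  | tail h1 h2 ih =>
    intro w' hw'
    obtain ⟨a, ha⟩ := h2
    refine Relation.ReflTransGen.tail h1 ⟨a, ?_⟩
    cases a with
    | send p q m =>
      obtain ⟨s', ht, he1, he2, he3⟩ := ha
      exact ⟨s', ht, he1, (hw' (p, q)).trans he2, fun ch hch => (hw' ch).trans (he3 ch hch)⟩
    | recv p q m =>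
      obtain ⟨s', ht, he1, he2, he3⟩ := ha
      exact ⟨s', ht, he1, ((hw' (p, q)).cons₂ m).trans he2,
        fun ch hch => (hw' ch).trans (he3 ch hch)⟩
    | tau p =>
      obtain ⟨s', ht, he1, he2⟩ := ha
      exact ⟨s', ht, he1, fun ch => (hw' ch).trans (he2 ch)⟩


open FSystem in
/-- By Higman's lemma, every upward-closed set of tuples of words (over finite
alphabets) under the componentwise subword ordering has finitely many minimal
elements and is a finite union of upward cones; consequently the complement of
the reachability set of a lossy FIFO system is a finite union of upward cones
and the reachability set itself is recognisable (regular). -/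
theorem higman_upward_closed_and_lossy_reach_regular
    {P M : Type} [DecidableEq P] [Finite P] [Finite M] (S : FSystem P M) :
    (∀ U : Set ((P × P) → List M),
      (∀ x ∈ U, ∀ y, (∀ ch, (x ch).Sublist (y ch)) → y ∈ U) →
      {x | x ∈ U ∧ ∀ y ∈ U, (∀ ch, (y ch).Sublist (x ch)) →
            ∀ ch, (x ch).Sublist (y ch)}.Finite ∧
      ∃ B : Set ((P × P) → List M), B.Finite ∧
        U = ⋃ b ∈ B, {y | ∀ ch, (b ch).Sublist (y ch)}) ∧
    (∀ g : ∀ p, S.State p,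
      (∃ B : Set ((P × P) → List M), B.Finite ∧
        {w | (g, w) ∉ ReachLossy S} = ⋃ b ∈ B, {y | ∀ ch, (b ch).Sublist (y ch)}) ∧
      Recognisable {w | (g, w) ∈ ReachLossy S}) := by
  classical
  constructor
  · intro U hU
    exact upward_part U hU
  · intro g
    have hUup : ∀ x ∈ {w | (g, w) ∉ ReachLossy S}, ∀ y,
        (∀ ch, (x ch).Sublist (y ch)) → y ∈ {w | (g, w) ∉ ReachLossy S} := by
      intro x hx y hxy hy
      exact hx (reachLossy_down S (g, y) hy x hxy)
    obtain ⟨-, B, hBfin, hBeq⟩ := upward_part _ hUup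
    refine ⟨⟨B, hBfin, hBeq⟩, ?_⟩
    have hPP := Fintype.ofFinite (P × P)
    obtain ⟨N, hN⟩ : ∃ N : ℕ, ∀ b ∈ B, ∀ ch, (b ch).length ≤ N := by
      refine ⟨hBfin.toFinset.sup
        (fun b => (Finset.univ : Finset (P × P)).sup fun ch => (b ch).length),
        fun b hb ch => ?_⟩
      have h1 : (b ch).length ≤ (Finset.univ : Finset (P × P)).sup fun ch => (b ch).length :=
        Finset.le_sup (f := fun ch => (b ch).length) (Finset.mem_univ ch)
      have h2 : ((Finset.univ : Finset (P × P)).sup fun ch => (b ch).length) ≤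
          hBfin.toFinset.sup
            (fun b => (Finset.univ : Finset (P × P)).sup fun ch => (b ch).length) :=
        Finset.le_sup (f := fun b => (Finset.univ : Finset (P × P)).sup fun ch => (b ch).length)
          (hBfin.mem_toFinset.mpr hb)
      exact le_trans h1 h2
    refine ⟨(P × P) → SWMon M N, Fintype.ofFinite _, inferInstance,
      fun w => fun ch => ⟨{u | u.1.Sublist (w ch)}⟩,
      {q | ∀ b ∈ B, ∃ ch, ∀ h : (b ch).length ≤ N,
        (⟨b ch, h⟩ : {u : List M // u.length ≤ N}) ∉ (q ch).carrier}, ?_, ?_⟩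
    · intro u v
      funext ch
      ext x
      constructor
      · intro hx
        have hx' : x.1.Sublist (u ch ++ v ch) := hx
        rw [List.sublist_append_iff] at hx'
        obtain ⟨l₁, l₂, heq, h₁, h₂⟩ := hx'
        have hl : l₁.length ≤ N ∧ l₂.length ≤ N := by
          have hx2 := x.2
          rw [heq, List.length_append] at hx2
          omega
        exact ⟨⟨l₁, hl.1⟩, ⟨l₂, hl.2⟩, h₁, h₂, heq⟩
      · rintro ⟨a, b, ha, hb, hx⟩
        show x.1.Sublist (u ch ++ v ch)
        rw [hx]
        exact List.Sublist.append (ha : a.1.Sublist (u ch)) (hb : b.1.Sublist (v ch))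
    · ext w
      simp only [Set.mem_preimage, Set.mem_setOf_eq]
      have hw : (g, w) ∈ ReachLossy S ↔
          ¬ w ∈ ⋃ b ∈ B, {y | ∀ ch, (b ch).Sublist (y ch)} := by
        rw [← hBeq]
        exact not_not.symm
      rw [hw]
      constructor
      · intro h b hb
        have h2 : ¬ ∀ ch, (b ch).Sublist (w ch) := fun hall =>
          h (Set.mem_biUnion hb hall)
        push_neg at h2
        obtain ⟨ch, hch⟩ := h2
        exact ⟨ch, fun _ => hch⟩
      · intro h hmem
        rw [Set.mem_iUnion₂] at hmem
        obtain ⟨b, hb, hall⟩ := hmem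
        obtain ⟨ch, hch⟩ := h b hb
        exact hch (hN b hb ch) (hall ch)
end
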